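/- ODE comparison underlying the bound on the maximum of the mean curvature (Theorem 2.2): Let a > 0 and λ₁ > 0, and let u : [0,λ₁] → ℝ be locally Lipschitz with u(λ) ≥ 0 for all λ, such that at almost every λ ∈ [0,λ₁] at which u is differentiable and u(λ) > a, one has u'(λ) ≤ −(1/3) u(λ) (u(λ)² − a²). Then max(u(λ₁) − a, 0) ≤ e^{−(2/3)a²λ₁} max(u(0) − a, 0); in particular u(λ₁) ≤ a + e^{−(2/3)a²λ₁} max(u(0) − a, 0). -/

import Mathlib

open Set MeasureTheory

theorem lip_deriv_nonpos_le {b : ℝ} (hb : 0 < b) {g : ℝ → ℝ} {C : NNReal}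
    (hg : LipschitzOnWith C g (Set.Icc 0 b))
    (h : ∀ᵐ x ∂(volume.restrict (Set.Ioo (0:ℝ) b)),
        DifferentiableAt ℝ g x ∧ deriv g x ≤ 0) :
    g b ≤ g 0 := by
  by_contra hcon
  push_neg at hcon
  -- the 1-Lipschitz projection onto `[0,b]`
  set p : ℝ → ℝ := fun x => max 0 (min x b) with hp
  have hpmem : ∀ x, p x ∈ Icc 0 b := fun x =>
    ⟨le_max_left _ _, max_le (le_of_lt hb) (min_le_right _ _)⟩
  have hpid : ∀ x ∈ Icc 0 b, p x = x := by
    intro x hx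
    simp [hp, min_eq_left hx.2, max_eq_right hx.1]
  have hplip : LipschitzWith 1 p := by
    apply LipschitzWith.of_dist_le_mul
    intro x y
    simp only [Real.dist_eq, NNReal.coe_one, one_mul, hp]
    calc |max 0 (min x b) - max 0 (min y b)|
        = |max (min x b) 0 - max (min y b) 0| := by rw [max_comm 0, max_comm 0]
      _ ≤ |min x b - min y b| := abs_max_sub_max_le_abs _ _ _
      _ ≤ max |x - y| |b - b| := abs_min_sub_min_le_max _ _ _ _
      _ = |x - y| := by simp
  -- the global Lipschitz extension of `g`
  set G : ℝ → ℝ := fun x => g (p x) with hG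
  have hGlip : LipschitzWith C G := by
    apply LipschitzWith.of_dist_le_mul
    intro x y
    calc dist (g (p x)) (g (p y)) ≤ C * dist (p x) (p y) :=
          hg.dist_le_mul _ (hpmem x) _ (hpmem y)
      _ ≤ C * dist x y := by
          have := hplip.dist_le_mul x y
          simp only [NNReal.coe_one, one_mul] at this
          exact mul_le_mul_of_nonneg_left this C.coe_nonneg
  -- the monotone function `f x = C x - G x`
  set f : ℝ → ℝ := fun x => (C : ℝ) * x - G x with hf
  have hfmono : Monotone f := by
    intro x y hxy
    have h1 : G y - G x ≤ C * (y - x) := by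
      have := hGlip.dist_le_mul y x
      rw [Real.dist_eq, Real.dist_eq] at this
      calc G y - G x ≤ |G y - G x| := le_abs_self _
        _ ≤ C * |y - x| := this
        _ = C * (y - x) := by rw [abs_of_nonneg (sub_nonneg.2 hxy)]
    simp only [hf]
    nlinarith
  have hfcont : Continuous f :=
    (continuous_const.mul continuous_id).sub hGlip.continuous
  set S : StieltjesFunction ℝ := ⟨f, hfmono, fun x => hfcont.continuousAt.continuousWithinAt⟩
    with hS
  have hSapp : ∀ x, S x = f x := fun _ => rfl
  -- a.e. on `(0,b)` the Radon–Nikodym derivative of `S.measure` is at least `C`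
  have key : ∀ᵐ x ∂(volume.restrict (Ioo 0 b)),
      ENNReal.ofReal (C : ℝ) ≤ S.measure.rnDeriv volume x := by
    have h1 : ∀ᵐ x ∂(volume.restrict (Ioo 0 b)),
        HasDerivAt S (S.measure.rnDeriv volume x).toReal x :=
      ae_restrict_of_ae S.ae_hasDerivAt
    have h2 : ∀ᵐ x ∂(volume.restrict (Ioo 0 b)),
        S.measure.rnDeriv volume x < ⊤ :=
      ae_restrict_of_ae (Measure.rnDeriv_lt_top _ _)
    have h3 : ∀ᵐ x ∂(volume.restrict (Ioo 0 b)), x ∈ Ioo 0 b :=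
      ae_restrict_mem measurableSet_Ioo
    filter_upwards [h, h1, h2, h3] with x hx h1x h2x h3x
    -- near `x`, `f` agrees with `fun y => C*y - g y`
    have hev : f =ᶠ[nhds x] fun y => (C : ℝ) * y - g y := by
      filter_upwards [Ioo_mem_nhds h3x.1 h3x.2] with y hy
      simp only [hf, hG, hpid y ⟨hy.1.le, hy.2.le⟩]
    have hd2 : HasDerivAt f ((C : ℝ) - deriv g x) x := by
      apply HasDerivAt.congr_of_eventuallyEq ?_ hev
      simpa [Pi.sub_def] using ((hasDerivAt_id x).const_mul (C : ℝ)).sub hx.1.hasDerivAt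
    have hd1 : HasDerivAt f (S.measure.rnDeriv volume x).toReal x := h1x
    have heq : (S.measure.rnDeriv volume x).toReal = (C : ℝ) - deriv g x :=
      hd1.unique hd2
    have hge : (C : ℝ) ≤ (S.measure.rnDeriv volume x).toReal := by
      rw [heq]; linarith [hx.2]
    calc ENNReal.ofReal (C : ℝ)
        ≤ ENNReal.ofReal (S.measure.rnDeriv volume x).toReal :=
          ENNReal.ofReal_le_ofReal hge
      _ = S.measure.rnDeriv volume x := ENNReal.ofReal_toReal h2x.ne
  -- integrate
  have hchain : ENNReal.ofReal (C : ℝ) * ENNReal.ofReal b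
      ≤ ENNReal.ofReal (f b - f 0) := by
    calc ENNReal.ofReal (C : ℝ) * ENNReal.ofReal b
        = ∫⁻ _ in Ioo (0:ℝ) b, ENNReal.ofReal (C : ℝ) := by
          rw [setLIntegral_const, Real.volume_Ioo, sub_zero]
      _ ≤ ∫⁻ x in Ioo (0:ℝ) b, S.measure.rnDeriv volume x := lintegral_mono_ae key
      _ ≤ ∫⁻ x in Ioc (0:ℝ) b, S.measure.rnDeriv volume x :=
          lintegral_mono_set Ioo_subset_Ioc_self
      _ ≤ S.measure (Ioc 0 b) := Measure.setLIntegral_rnDeriv_le _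
      _ = ENNReal.ofReal (f b - f 0) := S.measure_Ioc 0 b
  rw [← ENNReal.ofReal_mul C.coe_nonneg] at hchain
  -- conclude
  have hGb : G b = g b := by rw [hG]; simp only []; rw [hpid b ⟨hb.le, le_rfl⟩]
  have hG0 : G 0 = g 0 := by rw [hG]; simp only []; rw [hpid 0 ⟨le_rfl, hb.le⟩]
  have hfb : f b - f 0 = (C : ℝ) * b - (g b - g 0) := by
    simp [hf, hGb, hG0]; ring
  rcases eq_or_lt_of_le (C : ℝ).toNNReal.2 with hC0 | hC0
  · -- C = 0 : g is constant on [0,b]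
    have : (C : ℝ) = 0 := by
      have := hC0.symm
      simpa using this
    have hd := hg.dist_le_mul b ⟨hb.le, le_rfl⟩ 0 ⟨le_rfl, hb.le⟩
    rw [this, zero_mul] at hd
    rw [Real.dist_eq] at hd
    have : g b = g 0 := by
      have := abs_nonneg (g b - g 0)
      have habs : |g b - g 0| = 0 := le_antisymm hd (abs_nonneg _)
      linarith [abs_eq_zero.1 habs, sub_eq_zero.1 (abs_eq_zero.1 habs)]
    linarith
  · have hCb : 0 < (C : ℝ) * b := by
      have : (0:ℝ) < C := by simpa using hC0
      positivity
    have hlt : f b - f 0 < (C : ℝ) * b := by rw [hfb]; linarith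
    have : ENNReal.ofReal (f b - f 0) < ENNReal.ofReal ((C : ℝ) * b) :=
      (ENNReal.ofReal_lt_ofReal_iff hCb).2 hlt
    exact absurd hchain (by exact not_le.2 this)

/-- ODE comparison underlying the bound on the maximum of the mean curvature
(Theorem 2.2): if `u : [0,λ₁] → [0,∞)` is locally Lipschitz and a.e. on
`{u > a}` (where differentiable) satisfies `u' ≤ −(1/3)u(u² − a²)`, then
`max (u λ₁ − a) 0 ≤ e^{−(2/3)a²λ₁} max (u 0 − a) 0`; in particular
`u λ₁ ≤ a + e^{−(2/3)a²λ₁} max (u 0 − a) 0`. -/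
theorem mean_curvature_max_ode_comparison
    (a l₁ : ℝ) (ha : 0 < a) (hl₁ : 0 < l₁)
    (u : ℝ → ℝ)
    (hlip : ∃ C : NNReal, LipschitzOnWith C u (Set.Icc 0 l₁))
    (hnonneg : ∀ l ∈ Set.Icc (0 : ℝ) l₁, 0 ≤ u l)
    (hae : ∀ᵐ l ∂(volume.restrict (Set.Icc (0 : ℝ) l₁)),
      (DifferentiableAt ℝ u l ∧ a < u l) →
        deriv u l ≤ -(1/3) * u l * ((u l)^2 - a^2)) :
    max (u l₁ - a) 0 ≤ Real.exp (-(2/3) * a^2 * l₁) * max (u 0 - a) 0 ∧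
    u l₁ ≤ a + Real.exp (-(2/3) * a^2 * l₁) * max (u 0 - a) 0 := by
  obtain ⟨C, hC⟩ := hlip
  set c : ℝ := (2/3) * a^2 with hc
  have hcpos : 0 < c := by positivity
  set w : ℝ → ℝ := fun l => max (u l - a) 0 with hw
  have hwnonneg : ∀ l, 0 ≤ w l := fun l => le_max_right _ _
  have hwlip : LipschitzOnWith C w (Icc 0 l₁) := by
    apply LipschitzOnWith.of_dist_le_mul
    intro x hx y hy
    have h0 := hC.dist_le_mul x hx y hy
    rw [Real.dist_eq] at h0 ⊢
    rw [Real.dist_eq] at h0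
    calc |w x - w y| ≤ |(u x - a) - (u y - a)| := abs_max_sub_max_le_abs _ _ _
      _ = |u x - u y| := by ring_nf
      _ ≤ C * |x - y| := h0
  set g : ℝ → ℝ := fun l => Real.exp (c * l) * w l with hg
  -- an elementary Lipschitz estimate for `exp` on `(-∞, B]`
  have hexp_lip : ∀ p q : ℝ, p ≤ c * l₁ → q ≤ c * l₁ →
      |Real.exp p - Real.exp q| ≤ Real.exp (c * l₁) * |p - q| := by
    have one_sided : ∀ p q : ℝ, q ≤ p → p ≤ c * l₁ →
        Real.exp p - Real.exp q ≤ Real.exp (c * l₁) * (p - q) := by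
      intro p q hqp hp
      have h1 : Real.exp p * Real.exp (q - p) = Real.exp q := by
        rw [← Real.exp_add]; ring_nf
      nlinarith [Real.add_one_le_exp (q - p), Real.exp_pos p,
        Real.exp_le_exp.2 hp, sub_nonneg.2 hqp]
    intro p q hp hq
    rcases le_total q p with hqp | hpq
    · rw [abs_of_nonneg (sub_nonneg.2 (Real.exp_le_exp.2 hqp)),
        abs_of_nonneg (sub_nonneg.2 hqp)]
      exact one_sided p q hqp hp
    · rw [abs_sub_comm, abs_sub_comm p q,
        abs_of_nonneg (sub_nonneg.2 (Real.exp_le_exp.2 hpq)),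
        abs_of_nonneg (sub_nonneg.2 hpq)]
      exact one_sided q p hpq hq
  have hwbound : ∀ y ∈ Icc (0:ℝ) l₁, |w y| ≤ |w 0| + C * l₁ := by
    intro y hy
    have h0 := hwlip.dist_le_mul y hy 0 ⟨le_rfl, hl₁.le⟩
    rw [Real.dist_eq, Real.dist_eq, sub_zero] at h0
    have hyl : |y| ≤ l₁ := by rw [abs_of_nonneg hy.1]; exact hy.2
    calc |w y| ≤ |w y - w 0| + |w 0| := by
          have := abs_sub_abs_le_abs_sub (w y) (w 0); nlinarith [abs_nonneg (w y - w 0)]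
      _ ≤ C * l₁ + |w 0| := by
          have : (C:ℝ) * |y| ≤ C * l₁ := mul_le_mul_of_nonneg_left hyl C.coe_nonneg
          linarith
      _ = |w 0| + C * l₁ := by ring
  -- `g` is Lipschitz on `[0, l₁]`
  set K : ℝ := Real.exp (c*l₁) * C + (Real.exp (c*l₁) * c) * (|w 0| + C*l₁) with hK
  have hKnn : 0 ≤ K := by positivity
  have hglip : LipschitzOnWith K.toNNReal g (Icc 0 l₁) := by
    apply LipschitzOnWith.of_dist_le_mul
    intro x hx y hy
    rw [Real.dist_eq, Real.dist_eq, Real.coe_toNNReal _ hKnn]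
    have hcx : c * x ≤ c * l₁ := mul_le_mul_of_nonneg_left hx.2 hcpos.le
    have hcy : c * y ≤ c * l₁ := mul_le_mul_of_nonneg_left hy.2 hcpos.le
    have h1 : |w x - w y| ≤ C * |x - y| := by
      have := hwlip.dist_le_mul x hx y hy
      rwa [Real.dist_eq, Real.dist_eq] at this
    have h2 : |Real.exp (c*x) - Real.exp (c*y)| ≤ Real.exp (c*l₁) * (c * |x - y|) := by
      have := hexp_lip (c*x) (c*y) hcx hcy
      rwa [← mul_sub, abs_mul, abs_of_pos hcpos] at this
    have h3 : |w y| ≤ |w 0| + C * l₁ := hwbound y hy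
    have h4 : Real.exp (c*x) ≤ Real.exp (c*l₁) := Real.exp_le_exp.2 hcx
    have e1 : Real.exp (c*x) * |w x - w y| ≤ Real.exp (c*l₁) * (C * |x-y|) :=
      mul_le_mul h4 h1 (abs_nonneg _) (Real.exp_pos _).le
    have e2 : |Real.exp (c*x) - Real.exp (c*y)| * |w y|
        ≤ (Real.exp (c*l₁) * (c*|x-y|)) * (|w 0| + C*l₁) :=
      mul_le_mul h2 h3 (abs_nonneg _) (by positivity)
    calc |g x - g y|
        = |Real.exp (c*x) * (w x - w y) + (Real.exp (c*x) - Real.exp (c*y)) * w y| := by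
          simp only [hg]; ring_nf
      _ ≤ |Real.exp (c*x) * (w x - w y)| + |(Real.exp (c*x) - Real.exp (c*y)) * w y| :=
          abs_add_le _ _
      _ = Real.exp (c*x) * |w x - w y| + |Real.exp (c*x) - Real.exp (c*y)| * |w y| := by
          rw [abs_mul, abs_mul, abs_of_pos (Real.exp_pos _)]
      _ ≤ Real.exp (c*l₁) * (C * |x-y|) + (Real.exp (c*l₁) * (c*|x-y|)) * (|w 0| + C*l₁) :=
          add_le_add e1 e2
      _ = K * |x - y| := by rw [hK]; ring
  -- the a.e. derivative estimate for `g` on `(0, l₁)`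
  have haeg : ∀ᵐ x ∂(volume.restrict (Set.Ioo (0:ℝ) l₁)),
      DifferentiableAt ℝ g x ∧ deriv g x ≤ 0 := by
    have huD : ∀ᵐ x ∂(volume.restrict (Set.Ioo (0:ℝ) l₁)),
        DifferentiableWithinAt ℝ u (Icc 0 l₁) x :=
      ae_restrict_of_ae_restrict_of_subset Ioo_subset_Icc_self
        (hC.ae_differentiableWithinAt measurableSet_Icc)
    have hwD : ∀ᵐ x ∂(volume.restrict (Set.Ioo (0:ℝ) l₁)),
        DifferentiableWithinAt ℝ w (Icc 0 l₁) x :=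
      ae_restrict_of_ae_restrict_of_subset Ioo_subset_Icc_self
        (hwlip.ae_differentiableWithinAt measurableSet_Icc)
    have hae' : ∀ᵐ x ∂(volume.restrict (Set.Ioo (0:ℝ) l₁)),
        (DifferentiableAt ℝ u x ∧ a < u x) →
          deriv u x ≤ -(1/3) * u x * ((u x)^2 - a^2) :=
      ae_restrict_of_ae_restrict_of_subset Ioo_subset_Icc_self hae
    filter_upwards [huD, hwD, hae', ae_restrict_mem measurableSet_Ioo]
      with x huDx hwDx haex hxmem
    have hIcc : Icc (0:ℝ) l₁ ∈ nhds x := Icc_mem_nhds hxmem.1 hxmem.2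
    have hudiff : DifferentiableAt ℝ u x := huDx.differentiableAt hIcc
    have hwdiff : DifferentiableAt ℝ w x := hwDx.differentiableAt hIcc
    have he : HasDerivAt (fun l => Real.exp (c * l)) (Real.exp (c * x) * c) x := by
      simpa [Function.comp_def] using (Real.hasDerivAt_exp (c*x)).comp x ((hasDerivAt_id x).const_mul c)
    have hgd : HasDerivAt g (Real.exp (c*x) * c * w x + Real.exp (c*x) * deriv w x) x :=
      he.mul hwdiff.hasDerivAt
    refine ⟨hgd.differentiableAt, ?_⟩
    have hkey : deriv w x ≤ -c * w x := by
      rcases lt_trichotomy (u x) a with hlt | heq | hgt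
      · -- u < a near x, so w = 0 near x
        have hev : ∀ᶠ y in nhds x, u y < a :=
          hudiff.continuousAt.eventually (eventually_lt_nhds hlt)
        have hweq : w =ᶠ[nhds x] fun _ => (0:ℝ) := by
          filter_upwards [hev] with y hy
          simp [hw, max_eq_right (by linarith : u y - a ≤ 0)]
        have hwx : w x = 0 := by
          simp [hw, max_eq_right (by linarith : u x - a ≤ 0)]
        rw [hweq.deriv_eq, deriv_const, hwx]
        simp
      · -- u x = a : w has a local min at x
        have hwx : w x = 0 := by simp [hw, heq]
        have hmin : IsLocalMin w x :=
          Filter.Eventually.of_forall fun y => by rw [hwx]; exact hwnonneg y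
        rw [hmin.deriv_eq_zero, hwx]
        simp
      · -- u > a near x, so w = u - a near x
        have hev : ∀ᶠ y in nhds x, a < u y :=
          hudiff.continuousAt.eventually (eventually_gt_nhds hgt)
        have hweq : w =ᶠ[nhds x] fun y => u y - a := by
          filter_upwards [hev] with y hy
          simp [hw, max_eq_left (by linarith : (0:ℝ) ≤ u y - a)]
        have hwx : w x = u x - a := by
          simp [hw, max_eq_left (by linarith : (0:ℝ) ≤ u x - a)]
        have hder : deriv w x = deriv u x := by
          rw [hweq.deriv_eq]
          exact deriv_sub_const a
        have hub := haex ⟨hudiff, hgt⟩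
        rw [hder, hwx, hc]
        have hfinal : -(1/3) * u x * ((u x)^2 - a^2) ≤ -((2/3)*a^2) * (u x - a) := by
          nlinarith [mul_nonneg (sq_nonneg (u x - a)) (by linarith : (0:ℝ) ≤ u x + 2*a)]
        linarith
    rw [hgd.deriv]
    nlinarith [Real.exp_pos (c*x), hwnonneg x]
  -- apply the comparison lemma
  have hgle : g l₁ ≤ g 0 := lip_deriv_nonpos_le hl₁ hglip haeg
  have hg0 : g 0 = w 0 := by simp [hg]
  have hgl : g l₁ = Real.exp (c*l₁) * w l₁ := rfl
  rw [hgl, hg0] at hgle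
  have hkey : w l₁ ≤ Real.exp (-(c*l₁)) * w 0 := by
    have h1 : Real.exp (-(c*l₁)) * (Real.exp (c*l₁) * w l₁)
        ≤ Real.exp (-(c*l₁)) * w 0 :=
      mul_le_mul_of_nonneg_left hgle (Real.exp_pos _).le
    rwa [← mul_assoc, ← Real.exp_add, neg_add_cancel, Real.exp_zero, one_mul] at h1
  have hexp_eq : -(2/3) * a^2 * l₁ = -(c*l₁) := by rw [hc]; ring
  rw [hexp_eq]
  constructor
  · exact hkey
  · have h2 : u l₁ - a ≤ w l₁ := le_max_left _ _
    linarith
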